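/- There exist constants c_0 ∈ (0,1/4), C_1 ≥ 1 and c_2 > 0 such that the following holds for all integers n, J ≥ 1 and all q ∈ (0,1/2], where ε_{J,q}(n) is defined with this c_0: (i) ε_{J,q}(n) ≤ C_1 · φ_{J,q}(n); (ii) if 1 − (1−q)^n > c_0/(2J) (which holds in particular whenever q ≥ c_0/(nJ)), then ε_{J,q}(n) ≥ max(1/n − q, c_2 · φ_{J,q}(n)); (iii) if 1 − (1−q)^n ≤ c_0/(2J), then ε_{J,q}(n) = −q. -/

import Mathlib

open Finset
open Real

set_option maxHeartbeats 1000000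

open Finset

/-- `P(Y/n ≥ x)` for `Y ∼ Binomial(n,q)`. -/
noncomputable def binomTail (n : ℕ) (q : ℝ) (x : ℝ) : ℝ :=
  ∑ k ∈ Finset.range (n + 1),
    if x ≤ (k : ℝ) / n then (n.choose k) * q ^ k * (1 - q) ^ (n - k) else 0

/-- `ε_{J,q}(n) = inf{ε ∈ ℝ : P_{Y∼Binomial(n,q)}(Y/n ≥ q+ε) ≤ c₀/(2J)}`. -/
noncomputable def epsJ (c₀ : ℝ) (J : ℕ) (q : ℝ) (n : ℕ) : ℝ :=
  sInf {e : ℝ | binomTail n q (q + e) ≤ c₀ / (2 * J)}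

/-- `φ_{J,q}(n)`. -/
noncomputable def phi (J : ℕ) (q : ℝ) (n : ℕ) : ℝ :=
  if q = 0 then 0
  else if (n : ℝ) ≤ Real.log (J + 1) / Real.log (1 / q) then 1
  else if (n : ℝ) ≤ Real.log (J + 1) / (Real.exp 1 * q) then
    Real.log (J + 1) / (n * Real.log (Real.log (J + 1) / (n * q)))
  else Real.sqrt (q * Real.log (J + 1) / n)

lemma log_le_chord {c x : ℝ} (hc : 0 < c) (hx : 0 < x) :
    Real.log x ≤ Real.log c + x / c - 1 := by
  have h := Real.log_le_sub_one_of_pos (show (0:ℝ) < x / c by positivity)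
  rw [Real.log_div (ne_of_gt hx) (ne_of_gt hc)] at h
  linarith

lemma log_le_div_e {x : ℝ} (hx : 0 < x) : Real.log x ≤ x / Real.exp 1 := by
  have := log_le_chord (Real.exp_pos 1) hx
  rw [Real.log_exp] at this; linarith

lemma one_sub_inv_le_log {x : ℝ} (hx : 0 < x) : 1 - 1/x ≤ Real.log x := by
  have h := Real.log_le_sub_one_of_pos (show (0:ℝ) < 1/x by positivity)
  rw [Real.log_div one_ne_zero (ne_of_gt hx), Real.log_one] at h
  linarith

lemma neg_log_one_sub {q : ℝ} (h0 : 0 ≤ q) (h : q ≤ 1/2) : Real.log (1/(1-q)) ≤ 2*q := by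
  have h1 : (0:ℝ) < 1 - q := by linarith
  have h2 := Real.log_le_sub_one_of_pos (show (0:ℝ) < 1/(1-q) by positivity)
  have h3 : 1/(1-q) - 1 = q/(1-q) := by field_simp; ring
  rw [h3] at h2
  have : q/(1-q) ≤ 2*q := by
    rw [div_le_iff₀ h1]; nlinarith
  linarith

lemma two_mul_div_le_log {v : ℝ} (hv : 0 ≤ v) : 2*v/(2+v) ≤ Real.log (1+v) := by
  set f : ℝ → ℝ := fun y => Real.log (1+y) - 2*y/(2+y) with hf
  have hder : ∀ x ∈ interior (Set.Ici (0:ℝ)),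
      HasDerivAt f (1/(1+x) - 4/(2+x)^2) x := by
    intro x hx
    rw [interior_Ici] at hx
    simp only [Set.mem_Ioi] at hx
    have h1 : (0:ℝ) < 1 + x := by linarith
    have h2 : (0:ℝ) < 2 + x := by linarith
    have d1 : HasDerivAt (fun y : ℝ => Real.log (1+y)) (1/(1+x)) x := by
      have := ((hasDerivAt_id x).const_add 1).log (ne_of_gt h1)
      simpa using this
    have d2 : HasDerivAt (fun y : ℝ => 2*y/(2+y)) (4/(2+x)^2) x := by
      have := ((hasDerivAt_id x).const_mul 2).div ((hasDerivAt_id x).const_add 2) (ne_of_gt h2)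
      rw [show (4:ℝ)/(2+x)^2 = (2 * 1 * (2 + id x) - 2 * id x * 1) / (2 + id x) ^ 2 by simp only [id]; ring]
      exact this
    exact d1.sub d2
  have hmono : MonotoneOn f (Set.Ici 0) := by
    apply monotoneOn_of_deriv_nonneg (convex_Ici 0)
    · apply ContinuousOn.sub
      · apply ContinuousOn.log (by fun_prop)
        intro x hx; simp only [Set.mem_Ici] at hx; positivity
      · apply ContinuousOn.div (by fun_prop) (by fun_prop)
        intro x hx; simp only [Set.mem_Ici] at hx; positivity
    · intro x hx
      exact (hder x hx).differentiableAt.differentiableWithinAt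
    · intro x hx
      rw [(hder x hx).deriv]
      rw [interior_Ici] at hx
      simp only [Set.mem_Ioi] at hx
      have h1 : (0:ℝ) < 1 + x := by linarith
      have h2 : (0:ℝ) < 2 + x := by linarith
      rw [sub_nonneg, div_le_div_iff₀ (by positivity) h1]
      nlinarith [sq_nonneg x]
  have h0 : f 0 = 0 := by simp [hf]
  have := hmono (Set.mem_Ici.2 le_rfl) (Set.mem_Ici.2 hv) hv
  rw [h0] at this
  have hv2 : (0:ℝ) < 2 + v := by linarith
  simp only [hf] at this
  linarith

section BT
variable {n : ℕ} {q x y : ℝ}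

lemma pmf_nonneg (hq0 : 0 ≤ q) (hq1 : q ≤ 1) (k : ℕ) :
    0 ≤ (n.choose k : ℝ) * q ^ k * (1 - q) ^ (n - k) := by
  have : (0:ℝ) ≤ 1 - q := by linarith
  positivity

lemma sum_pmf (n : ℕ) (q : ℝ) :
    ∑ k ∈ Finset.range (n+1), (n.choose k : ℝ) * q^k * (1-q)^(n-k) = 1 := by
  have h := add_pow q (1-q) n
  have h2 : q + (1-q) = 1 := by ring
  rw [h2, one_pow] at h
  calc ∑ k ∈ Finset.range (n+1), (n.choose k : ℝ) * q^k * (1-q)^(n-k)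
      = ∑ k ∈ Finset.range (n+1), q^k * (1-q)^(n-k) * (n.choose k : ℝ) :=
        Finset.sum_congr rfl (fun k _ => by ring)
    _ = 1 := h.symm

lemma binomTail_nonneg (hq0 : 0 ≤ q) (hq1 : q ≤ 1) : 0 ≤ binomTail n q x := by
  apply Finset.sum_nonneg
  intro k _
  split
  · exact pmf_nonneg hq0 hq1 k
  · exact le_refl 0

lemma binomTail_anti (hq0 : 0 ≤ q) (hq1 : q ≤ 1) (hxy : x ≤ y) :
    binomTail n q y ≤ binomTail n q x := by
  apply Finset.sum_le_sum
  intro k _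
  split
  case isTrue h => rw [if_pos (le_trans hxy h)]
  case isFalse h =>
    split
    · exact pmf_nonneg hq0 hq1 k
    · exact le_refl 0

lemma binomTail_eq_one (hx : x ≤ 0) : binomTail n q x = 1 := by
  have : binomTail n q x = ∑ k ∈ Finset.range (n+1), (n.choose k : ℝ) * q^k * (1-q)^(n-k) := by
    apply Finset.sum_congr rfl
    intro k _
    rw [if_pos (le_trans hx (by positivity))]
  rw [this, sum_pmf]

lemma binomTail_eq_zero (hx : 1 < x) : binomTail n q x = 0 := by
  rw [binomTail]
  apply Finset.sum_eq_zero
  intro k hk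
  rw [Finset.mem_range] at hk
  have hk' : (k:ℝ) ≤ n := by exact_mod_cast Nat.lt_succ_iff.mp hk
  have h1 : (k:ℝ)/n ≤ 1 := by
    rcases Nat.eq_zero_or_pos n with h | h
    · subst h; simp at hk; subst hk; norm_num
    · rw [div_le_one (by exact_mod_cast h)]; exact hk'
  rw [if_neg (by linarith)]

lemma binomTail_eq_one_sub (hn : 1 ≤ n) (hx1 : 0 < x) (hx2 : x ≤ 1/n) :
    binomTail n q x = 1 - (1-q)^n := by
  have hn0 : (0:ℝ) < n := by exact_mod_cast hn
  have key : binomTail n q x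
      = ∑ k ∈ Finset.range (n+1), ((n.choose k : ℝ) * q^k * (1-q)^(n-k)
        - (if k = 0 then (n.choose k : ℝ) * q^k * (1-q)^(n-k) else 0)) := by
    rw [binomTail]
    apply Finset.sum_congr rfl
    intro k _
    rcases Nat.eq_zero_or_pos k with hk | hk
    · subst hk
      rw [if_pos rfl, if_neg (by push_cast; simpa using hx1.not_ge)]
      ring
    · have h1 : (1:ℝ) ≤ k := by exact_mod_cast hk
      rw [if_pos, if_neg hk.ne']
      · ring
      · refine le_trans hx2 ?_
        gcongr
  rw [key, Finset.sum_sub_distrib, sum_pmf]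
  have h0 : ∑ k ∈ Finset.range (n+1),
      (if k = 0 then (n.choose k : ℝ) * q^k * (1-q)^(n-k) else 0)
      = (1-q)^n := by
    rw [Finset.sum_eq_single_of_mem 0 (Finset.mem_range.2 (Nat.succ_pos n))]
    · simp
    · intro b _ hb; rw [if_neg hb]
  rw [h0]

lemma binomTail_ge_sum (F : Finset ℕ) (hF : F ⊆ Finset.range (n+1))
    (hq0 : 0 ≤ q) (hq1 : q ≤ 1) (h : ∀ k ∈ F, x ≤ (k:ℝ)/n) :
    ∑ k ∈ F, (n.choose k : ℝ) * q^k * (1-q)^(n-k) ≤ binomTail n q x := by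
  rw [binomTail]
  calc ∑ k ∈ F, (n.choose k : ℝ) * q^k * (1-q)^(n-k)
      = ∑ k ∈ F, (if x ≤ (k:ℝ)/n then (n.choose k : ℝ) * q^k * (1-q)^(n-k) else 0) := by
        apply Finset.sum_congr rfl
        intro k hk; rw [if_pos (h k hk)]
    _ ≤ _ := by
        apply Finset.sum_le_sum_of_subset_of_nonneg hF
        intro k _ _
        split
        · exact pmf_nonneg hq0 hq1 k
        · exact le_refl 0

lemma binomTail_chernoff (n : ℕ) (q x lam : ℝ) (hq0 : 0 ≤ q) (hq1 : q ≤ 1) (hlam : 0 ≤ lam) :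
    binomTail n q x ≤ Real.exp (-(lam * n * x)) * (1 - q + q * Real.exp lam)^n := by
  have key : binomTail n q x ≤ ∑ k ∈ Finset.range (n+1),
      (n.choose k : ℝ) * (q * Real.exp lam)^k * (1-q)^(n-k) * Real.exp (-(lam * n * x)) := by
    rw [binomTail]
    apply Finset.sum_le_sum
    intro k hk
    have hterm : (0:ℝ) ≤ (n.choose k : ℝ) * q^k * (1-q)^(n-k) := pmf_nonneg hq0 hq1 k
    have hrw : (n.choose k : ℝ) * (q * Real.exp lam)^k * (1-q)^(n-k) * Real.exp (-(lam * n * x))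
        = ((n.choose k : ℝ) * q^k * (1-q)^(n-k)) * Real.exp (lam * k - lam * n * x) := by
      rw [mul_pow, ← Real.exp_nat_mul]
      rw [show lam * k - lam * n * x = k * lam + -(lam * n * x) by ring, Real.exp_add]
      ring
    split
    case isTrue h =>
      rw [hrw]
      nth_rewrite 1 [← mul_one ((n.choose k : ℝ) * q^k * (1-q)^(n-k))]
      apply mul_le_mul_of_nonneg_left _ hterm
      rw [← Real.exp_zero]
      apply Real.exp_le_exp.2
      rcases Nat.eq_zero_or_pos n with hn | hn
      · subst hn
        rw [Finset.mem_range] at hk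
        have hk0 : k = 0 := by omega
        subst hk0
        simp
      · have hn0 : (0:ℝ) < n := by exact_mod_cast hn
        have : x * n ≤ k := by
          rw [le_div_iff₀ hn0] at h
          linarith
        nlinarith
    case isFalse h =>
      rw [hrw]
      positivity
  rw [← Finset.sum_mul] at key
  have h2 : ∑ k ∈ Finset.range (n+1), (n.choose k : ℝ) * (q * Real.exp lam)^k * (1-q)^(n-k)
      = (1 - q + q * Real.exp lam)^n := by
    have h := add_pow (q * Real.exp lam) (1-q) n
    rw [show q * Real.exp lam + (1-q) = 1 - q + q * Real.exp lam by ring] at h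
    rw [h]
    exact Finset.sum_congr rfl (fun k _ => by ring)
  rw [h2] at key
  rw [mul_comm] at key
  exact key

lemma stirling_ge (n : ℕ) (hn : 1 ≤ n) :
    Real.sqrt π ≤ Stirling.stirlingSeq n := by
  obtain ⟨m, rfl⟩ : ∃ m, n = m + 1 := ⟨n-1, by omega⟩
  have hanti : Antitone (Stirling.stirlingSeq ∘ Nat.succ) := Stirling.stirlingSeq'_antitone
  have htend : Filter.Tendsto (Stirling.stirlingSeq ∘ Nat.succ) Filter.atTop (nhds (Real.sqrt π)) := by
    apply Stirling.tendsto_stirlingSeq_sqrt_pi.comp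
    exact Filter.tendsto_add_atTop_nat 1
  exact hanti.le_of_tendsto htend m

lemma stirling_le (n : ℕ) (hn : 1 ≤ n) :
    Stirling.stirlingSeq n ≤ Real.exp 1 / Real.sqrt 2 := by
  obtain ⟨m, rfl⟩ : ∃ m, n = m + 1 := ⟨n-1, by omega⟩
  have := Stirling.stirlingSeq'_antitone (Nat.zero_le m)
  simpa [Stirling.stirlingSeq_one] using this

lemma denom_pos (n : ℕ) (hn : 1 ≤ n) :
    (0:ℝ) < Real.sqrt (2*n) * ((n:ℝ)/Real.exp 1)^n := by
  have h : (0:ℝ) < n := by exact_mod_cast hn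
  positivity

lemma fact_ge (n : ℕ) (hn : 1 ≤ n) :
    Real.sqrt 2 * Real.sqrt π * Real.sqrt n * ((n:ℝ)/Real.exp 1)^n ≤ ((n.factorial : ℕ) : ℝ) := by
  have h := stirling_ge n hn
  rw [Stirling.stirlingSeq, le_div_iff₀ (denom_pos n hn)] at h
  have h2 : Real.sqrt (2*(n:ℝ)) = Real.sqrt 2 * Real.sqrt n := Real.sqrt_mul (by norm_num) _
  rw [h2] at h
  calc Real.sqrt 2 * Real.sqrt π * Real.sqrt n * ((n:ℝ)/Real.exp 1)^n
      = Real.sqrt π * (Real.sqrt 2 * Real.sqrt n * ((n:ℝ)/Real.exp 1)^n) := by ring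
    _ ≤ _ := h

lemma fact_le (n : ℕ) (hn : 1 ≤ n) :
    ((n.factorial : ℕ) : ℝ) ≤ Real.exp 1 * Real.sqrt n * ((n:ℝ)/Real.exp 1)^n := by
  have h := stirling_le n hn
  rw [Stirling.stirlingSeq, div_le_iff₀ (denom_pos n hn)] at h
  have h2 : Real.sqrt (2*(n:ℝ)) = Real.sqrt 2 * Real.sqrt n := Real.sqrt_mul (by norm_num) _
  rw [h2] at h
  have hs2 : (0:ℝ) < Real.sqrt 2 := by positivity
  calc ((n.factorial : ℕ) : ℝ) ≤ Real.exp 1 / Real.sqrt 2 * (Real.sqrt 2 * Real.sqrt n * ((n:ℝ)/Real.exp 1)^n) := h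
    _ = Real.exp 1 * Real.sqrt n * ((n:ℝ)/Real.exp 1)^n := by field_simp

lemma const_third : (1/3 : ℝ) * Real.exp 1 ^ 2 ≤ Real.sqrt 2 * Real.sqrt π := by
  have h2 : (1.41421:ℝ) ≤ Real.sqrt 2 := by
    rw [show (1.41421:ℝ) = Real.sqrt (1.41421^2) from (Real.sqrt_sq (by norm_num)).symm]
    exact Real.sqrt_le_sqrt (by norm_num)
  have hpi : (1.77245:ℝ) ≤ Real.sqrt π := by
    rw [show (1.77245:ℝ) = Real.sqrt (1.77245^2) from (Real.sqrt_sq (by norm_num)).symm]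
    apply Real.sqrt_le_sqrt
    nlinarith [Real.pi_gt_d6]
  have he : Real.exp 1 ≤ 2.7182818286 := le_of_lt Real.exp_one_lt_d9
  have he0 : (0:ℝ) < Real.exp 1 := Real.exp_pos 1
  have he2 : Real.exp 1 ^ 2 ≤ 7.389057 := by nlinarith
  nlinarith

lemma pmf_lower (n k : ℕ) (q : ℝ) (hq : 0 < q) (hq1 : q < 1) (h1 : 1 ≤ k) (h2 : k < n) :
    (1/3 : ℝ) / Real.sqrt k * (((n:ℝ)*q/k)^k * (((n:ℝ)*(1-q))/((n:ℝ)-k))^(n-k))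
      ≤ (n.choose k : ℝ) * q^k * (1-q)^(n-k) := by
  set j := n - k with hjdef
  have hj1 : 1 ≤ j := by omega
  have hkj : k + j = n := by omega
  have hM : ((j:ℕ):ℝ) = (n:ℝ) - (k:ℝ) := by rw [hjdef, Nat.cast_sub h2.le]
  have hqq : (0:ℝ) < 1 - q := by linarith
  have hK0 : (0:ℝ) < (k:ℝ) := by exact_mod_cast h1
  have hN0 : (0:ℝ) < (n:ℝ) := by exact_mod_cast (by omega : 1 ≤ n)
  have hM0 : (0:ℝ) < (j:ℝ) := by exact_mod_cast hj1
  have hNK : (0:ℝ) < (n:ℝ) - (k:ℝ) := by rw [← hM]; exact hM0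
  have he0 : (0:ℝ) < Real.exp 1 := Real.exp_pos 1
  have hB : (0:ℝ) < (Real.exp 1 * Real.sqrt k * ((k:ℝ)/Real.exp 1)^k)
      * (Real.exp 1 * Real.sqrt j * ((j:ℝ)/Real.exp 1)^j) := by positivity
  -- choose lower bound
  have hC : Real.sqrt 2 * Real.sqrt π * Real.sqrt n * ((n:ℝ)/Real.exp 1)^n
      / ((Real.exp 1 * Real.sqrt k * ((k:ℝ)/Real.exp 1)^k)
        * (Real.exp 1 * Real.sqrt j * ((j:ℝ)/Real.exp 1)^j))
      ≤ (n.choose k : ℝ) := by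
    rw [Nat.cast_choose ℝ h2.le]
    push_cast
    apply div_le_div₀ (by positivity) (fact_ge n (by omega)) (by positivity)
    exact mul_le_mul (fact_le k h1) (fact_le j hj1) (by positivity) (by positivity)
  -- power splitting identity
  have hpow : ((n:ℝ)/Real.exp 1)^n = ((n:ℝ)/Real.exp 1)^k * ((n:ℝ)/Real.exp 1)^j := by
    rw [← pow_add, hkj]
  have e1 : ((n:ℝ)/Real.exp 1)^k * q^k = ((k:ℝ)/Real.exp 1)^k * (((n:ℝ)*q/k))^k := by
    rw [← mul_pow, ← mul_pow]; congr 1; field_simp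
  have e2 : ((n:ℝ)/Real.exp 1)^j * (1-q)^j
      = ((j:ℝ)/Real.exp 1)^j * ((((n:ℝ)*(1-q))/((n:ℝ)-(k:ℝ))))^j := by
    rw [← mul_pow, ← mul_pow]; congr 1; rw [hM]; field_simp
  have hsplit : ((n:ℝ)/Real.exp 1)^n * (q^k * (1-q)^j)
      = ((k:ℝ)/Real.exp 1)^k * ((j:ℝ)/Real.exp 1)^j
        * ((((n:ℝ)*q/k))^k * ((((n:ℝ)*(1-q))/((n:ℝ)-(k:ℝ))))^j) := by
    rw [hpow]
    calc ((n:ℝ)/Real.exp 1)^k * ((n:ℝ)/Real.exp 1)^j * (q^k * (1-q)^j)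
        = (((n:ℝ)/Real.exp 1)^k * q^k) * (((n:ℝ)/Real.exp 1)^j * (1-q)^j) := by ring
      _ = _ := by rw [e1, e2]; ring
  -- scalar inequality
  have hjn : Real.sqrt j ≤ Real.sqrt n := by
    apply Real.sqrt_le_sqrt; exact_mod_cast (by omega : j ≤ n)
  have hsc : (1/3:ℝ)/Real.sqrt k*(Real.exp 1*Real.sqrt k)*(Real.exp 1*Real.sqrt j)
      ≤ Real.sqrt 2*Real.sqrt π*Real.sqrt n := by
    have hsk : (0:ℝ) < Real.sqrt k := Real.sqrt_pos.2 hK0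
    have heq : (1/3:ℝ)/Real.sqrt k*(Real.exp 1*Real.sqrt k)*(Real.exp 1*Real.sqrt j)
        = (1/3:ℝ)*Real.exp 1^2*Real.sqrt j := by
      field_simp
    rw [heq]
    calc (1/3:ℝ)*Real.exp 1^2*Real.sqrt j ≤ (Real.sqrt 2*Real.sqrt π)*Real.sqrt j :=
          mul_le_mul_of_nonneg_right const_third (Real.sqrt_nonneg _)
      _ ≤ (Real.sqrt 2*Real.sqrt π)*Real.sqrt n :=
          mul_le_mul_of_nonneg_left hjn (by positivity)
  -- step 1
  have step1 : (1/3 : ℝ) / Real.sqrt k * (((n:ℝ)*q/k)^k * (((n:ℝ)*(1-q))/((n:ℝ)-k))^j)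
      ≤ Real.sqrt 2 * Real.sqrt π * Real.sqrt n * ((n:ℝ)/Real.exp 1)^n * (q^k * (1-q)^j)
        / ((Real.exp 1 * Real.sqrt k * ((k:ℝ)/Real.exp 1)^k)
          * (Real.exp 1 * Real.sqrt j * ((j:ℝ)/Real.exp 1)^j)) := by
    rw [le_div_iff₀ hB]
    have hrhs : Real.sqrt 2 * Real.sqrt π * Real.sqrt n * ((n:ℝ)/Real.exp 1)^n * (q^k * (1-q)^j)
        = Real.sqrt 2 * Real.sqrt π * Real.sqrt n *
          (((k:ℝ)/Real.exp 1)^k * ((j:ℝ)/Real.exp 1)^j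
            * ((((n:ℝ)*q/k))^k * ((((n:ℝ)*(1-q))/((n:ℝ)-(k:ℝ))))^j)) := by
      rw [mul_assoc, hsplit]
    rw [hrhs]
    have hG : (0:ℝ) ≤ ((k:ℝ)/Real.exp 1)^k * ((j:ℝ)/Real.exp 1)^j
        * ((((n:ℝ)*q/k))^k * ((((n:ℝ)*(1-q))/((n:ℝ)-(k:ℝ))))^j) := by positivity
    calc (1/3 : ℝ) / Real.sqrt k * (((n:ℝ)*q/k)^k * (((n:ℝ)*(1-q))/((n:ℝ)-k))^j)
          * ((Real.exp 1 * Real.sqrt k * ((k:ℝ)/Real.exp 1)^k)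
            * (Real.exp 1 * Real.sqrt j * ((j:ℝ)/Real.exp 1)^j))
        = ((1/3:ℝ)/Real.sqrt k*(Real.exp 1*Real.sqrt k)*(Real.exp 1*Real.sqrt j))
          * (((k:ℝ)/Real.exp 1)^k * ((j:ℝ)/Real.exp 1)^j
            * ((((n:ℝ)*q/k))^k * ((((n:ℝ)*(1-q))/((n:ℝ)-(k:ℝ))))^j)) := by ring
      _ ≤ (Real.sqrt 2*Real.sqrt π*Real.sqrt n)
          * (((k:ℝ)/Real.exp 1)^k * ((j:ℝ)/Real.exp 1)^j
            * ((((n:ℝ)*q/k))^k * ((((n:ℝ)*(1-q))/((n:ℝ)-(k:ℝ))))^j)) :=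
          mul_le_mul_of_nonneg_right hsc hG
      _ = _ := by ring
  calc (1/3 : ℝ) / Real.sqrt k * (((n:ℝ)*q/k)^k * (((n:ℝ)*(1-q))/((n:ℝ)-k))^j)
      ≤ _ := step1
    _ = (Real.sqrt 2 * Real.sqrt π * Real.sqrt n * ((n:ℝ)/Real.exp 1)^n
        / ((Real.exp 1 * Real.sqrt k * ((k:ℝ)/Real.exp 1)^k)
          * (Real.exp 1 * Real.sqrt j * ((j:ℝ)/Real.exp 1)^j))) * (q^k * (1-q)^j) := by
        rw [div_mul_eq_mul_div]
    _ ≤ (n.choose k : ℝ) * (q^k * (1-q)^j) := mul_le_mul_of_nonneg_right hC (by positivity)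
    _ = (n.choose k : ℝ) * q^k * (1-q)^j := by ring

lemma pow_eq_exp {x : ℝ} (hx : 0 < x) (k : ℕ) : x^k = Real.exp (k * Real.log x) := by
  rw [← Real.exp_log (pow_pos hx k), Real.log_pow]

lemma xlog_mono {a u v : ℝ} (ha : 0 < a) (hu : a ≤ u) (huv : u ≤ v) :
    u * Real.log (u/a) ≤ v * Real.log (v/a) := by
  have hu0 : 0 < u := lt_of_lt_of_le ha hu
  have h1 : Real.log (u/a) ≤ Real.log (v/a) := by
    apply Real.log_le_log (by positivity)
    gcongr
  have h2 : 0 ≤ Real.log (v/a) := Real.log_nonneg (by rw [le_div_iff₀ ha]; linarith)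
  calc u * Real.log (u/a) ≤ u * Real.log (v/a) := by
        apply mul_le_mul_of_nonneg_left h1 hu0.le
    _ ≤ v * Real.log (v/a) := mul_le_mul_of_nonneg_right huv h2

lemma xlog_le_chi {a u : ℝ} (ha : 0 < a) (hu : 0 ≤ u) :
    u * Real.log (u/a) ≤ u*(u-a)/a := by
  rcases eq_or_lt_of_le hu with h | h
  · simp [← h]
  · have := Real.log_le_sub_one_of_pos (show (0:ℝ) < u/a by positivity)
    have h2 : u * Real.log (u/a) ≤ u * (u/a - 1) := mul_le_mul_of_nonneg_left this h.le
    calc u * Real.log (u/a) ≤ u * (u/a - 1) := h2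
      _ = u*(u-a)/a := by field_simp

lemma chi2_bound {a K N : ℝ} (ha : 0 < a) (haN : a < N) (hK0 : 0 < K) (hKN : K < N) :
    K * Real.log (K/a) + (N-K) * Real.log ((N-K)/(N-a))
      ≤ (K-a)^2 * N/(a*(N-a)) := by
  have hNa : 0 < N - a := by linarith
  have hNK : 0 < N - K := by linarith
  have l1 := Real.log_le_sub_one_of_pos (show (0:ℝ) < K/a by positivity)
  have l2 := Real.log_le_sub_one_of_pos (show (0:ℝ) < (N-K)/(N-a) by positivity)
  have h1 : K * Real.log (K/a) ≤ K * (K/a - 1) := mul_le_mul_of_nonneg_left l1 hK0.le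
  have h2 : (N-K) * Real.log ((N-K)/(N-a)) ≤ (N-K) * ((N-K)/(N-a) - 1) :=
    mul_le_mul_of_nonneg_left l2 hNK.le
  have key : K * (K/a - 1) + (N-K) * ((N-K)/(N-a) - 1) = (K-a)^2 * N/(a*(N-a)) := by
    field_simp
    ring
  linarith

lemma H_le {n : ℕ} {q K : ℝ} (hq : 0 < q) (hq2 : q ≤ 1/2) (hN : 0 < (n:ℝ))
    (hK0 : 0 ≤ K) (hKN : K < (n:ℝ)) :
    ((n:ℝ)-K) * Real.log (((n:ℝ)-K)/((n:ℝ)*(1-q))) ≤ 2*((n:ℝ)*q) := by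
  have h1q : (0:ℝ) < 1 - q := by linarith
  have hNK : (0:ℝ) < (n:ℝ) - K := by linarith
  have hlog : Real.log (((n:ℝ)-K)/((n:ℝ)*(1-q))) ≤ Real.log (1/(1-q)) := by
    apply Real.log_le_log (by positivity)
    rw [div_le_div_iff₀ (by positivity) h1q]
    nlinarith
  have hlog2 : Real.log (1/(1-q)) ≤ 2*q := neg_log_one_sub hq.le hq2
  calc ((n:ℝ)-K) * Real.log (((n:ℝ)-K)/((n:ℝ)*(1-q))) ≤ ((n:ℝ)-K) * (2*q) := by
        apply mul_le_mul_of_nonneg_left (le_trans hlog hlog2) hNK.le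
    _ ≤ 2*((n:ℝ)*q) := by nlinarith

lemma pmf_lower_exp (n k : ℕ) (q : ℝ) (hq : 0 < q) (hq1 : q < 1) (h1 : 1 ≤ k) (h2 : k < n) :
    (1/3 : ℝ) / Real.sqrt k *
      Real.exp (-((k:ℝ) * Real.log ((k:ℝ)/((n:ℝ)*q))
        + ((n:ℝ)-(k:ℝ)) * Real.log ((((n:ℝ)-(k:ℝ)))/((n:ℝ)*(1-q)))))
      ≤ (n.choose k : ℝ) * q^k * (1-q)^(n-k) := by
  refine le_trans (le_of_eq ?_) (pmf_lower n k q hq hq1 h1 h2)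
  have hK0 : (0:ℝ) < (k:ℝ) := by exact_mod_cast h1
  have hN0 : (0:ℝ) < (n:ℝ) := by exact_mod_cast (by omega : 0 < n)
  have hNK : (0:ℝ) < (n:ℝ) - (k:ℝ) := by
    have : (k:ℝ) < (n:ℝ) := by exact_mod_cast h2
    linarith
  have h1q : (0:ℝ) < 1 - q := by linarith
  congr 1
  rw [pow_eq_exp (show (0:ℝ) < (n:ℝ)*q/k by positivity),
      pow_eq_exp (show (0:ℝ) < ((n:ℝ)*(1-q))/((n:ℝ)-(k:ℝ)) by positivity),
      ← Real.exp_add]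
  congr 1
  have e1 : Real.log ((n:ℝ)*q/(k:ℝ)) = - Real.log ((k:ℝ)/((n:ℝ)*q)) := by
    rw [← Real.log_inv, inv_div]
  have e2 : Real.log (((n:ℝ)*(1-q))/((n:ℝ)-(k:ℝ)))
      = - Real.log (((n:ℝ)-(k:ℝ))/((n:ℝ)*(1-q))) := by
    rw [← Real.log_inv, inv_div]
  have hcast : ((n-k : ℕ):ℝ) = (n:ℝ) - (k:ℝ) := by rw [Nat.cast_sub h2.le]
  rw [e1, e2, hcast]
  ring

lemma chernoff_v (n : ℕ) (q v : ℝ) (hq0 : 0 ≤ q) (hq1 : q ≤ 1) (hv : 0 < v) :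
    binomTail n q (q*(1+v)) ≤ Real.exp ((n:ℝ)*q*v - (n:ℝ)*q*(1+v)*Real.log (1+v)) := by
  have h1v : (0:ℝ) < 1+v := by linarith
  have hlam : 0 ≤ Real.log (1+v) := Real.log_nonneg (by linarith)
  have h := binomTail_chernoff n q (q*(1+v)) (Real.log (1+v)) hq0 hq1 hlam
  rw [Real.exp_log h1v] at h
  have h2 : (1 - q + q*(1+v))^n ≤ Real.exp ((n:ℝ)*(q*v)) := by
    have hrw : 1 - q + q*(1+v) = 1 + q*v := by ring
    rw [hrw]
    calc (1+q*v)^n ≤ (Real.exp (q*v))^n := by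
          apply pow_le_pow_left₀ (by positivity) (by linarith [Real.add_one_le_exp (q*v)])
      _ = Real.exp ((n:ℝ)*(q*v)) := by rw [← Real.exp_nat_mul]
  calc binomTail n q (q*(1+v))
      ≤ Real.exp (-(Real.log (1+v) * n * (q*(1+v)))) * (1 - q + q*(1+v))^n := h
    _ ≤ Real.exp (-(Real.log (1+v) * n * (q*(1+v)))) * Real.exp ((n:ℝ)*(q*v)) :=
        mul_le_mul_of_nonneg_left h2 (Real.exp_pos _).le
    _ = Real.exp ((n:ℝ)*q*v - (n:ℝ)*q*(1+v)*Real.log (1+v)) := by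
        rw [← Real.exp_add]; congr 1; ring

lemma margin_to_target (J : ℕ) (hJ : 1 ≤ J) {E : ℝ}
    (hE : E ≤ -(1460 * Real.log ((J:ℝ)+1))) :
    Real.exp E ≤ Real.exp (-1000) / (2*(J:ℝ)) := by
  have hJ1 : (1:ℝ) ≤ (J:ℝ) := by exact_mod_cast hJ
  have h2J : (0:ℝ) < 2*(J:ℝ) := by linarith
  rw [show Real.exp (-1000) / (2*(J:ℝ)) = Real.exp (-1000 - Real.log (2*(J:ℝ))) by
    rw [Real.exp_sub, Real.exp_log h2J]]
  apply Real.exp_le_exp.2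
  have e1 : Real.log (2*(J:ℝ)) = Real.log 2 + Real.log (J:ℝ) :=
    Real.log_mul (by norm_num) (by linarith)
  have e2 : Real.log 2 ≤ Real.log ((J:ℝ)+1) := Real.log_le_log (by norm_num) (by linarith)
  have e3 : Real.log (J:ℝ) ≤ Real.log ((J:ℝ)+1) := Real.log_le_log (by linarith) (by linarith)
  have e4 : (0.693:ℝ) ≤ Real.log 2 := by linarith [Real.log_two_gt_d9]
  have e5 : (0.693:ℝ) ≤ Real.log ((J:ℝ)+1) := by linarith
  linarith

lemma lower_target (J : ℕ) (hJ : 1 ≤ J) {P : ℝ}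
    (h : Real.exp (-Real.log ((J:ℝ)+1) - 900) ≤ P) :
    Real.exp (-1000) / (2*(J:ℝ)) < P := by
  have hJ1 : (1:ℝ) ≤ (J:ℝ) := by exact_mod_cast hJ
  have h2J : (0:ℝ) < 2*(J:ℝ) := by linarith
  have hJ2 : (0:ℝ) < (J:ℝ)+1 := by linarith
  apply lt_of_lt_of_le _ h
  rw [show -Real.log ((J:ℝ)+1) - 900 = -900 - Real.log ((J:ℝ)+1) by ring,
      Real.exp_sub, Real.exp_log hJ2]
  rw [div_lt_div_iff₀ h2J hJ2]
  have h1 : Real.exp (-1000) < Real.exp (-900) := Real.exp_lt_exp.2 (by norm_num)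
  nlinarith [Real.exp_pos (-1000), Real.exp_pos (-900)]

lemma part_i (n J : ℕ) (hn : 1 ≤ n) (hJ : 1 ≤ J) (q : ℝ) (hq : 0 < q) (hq2 : q ≤ 1/2) :
    binomTail n q (q + 6000 * phi J q n) ≤ Real.exp (-1000) / (2*(J:ℝ)) := by
  have hJ1 : (1:ℝ) ≤ (J:ℝ) := by exact_mod_cast hJ
  have hq1 : q < 1 := by linarith
  have hn0 : (0:ℝ) < (n:ℝ) := by exact_mod_cast hn
  unfold phi
  rw [if_neg hq.ne']
  split_ifs with hb1 hb2
  · -- regime 1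
    rw [mul_one, binomTail_eq_zero (by linarith : (1:ℝ) < q + 6000)]
    positivity
  · -- regime 2
    set L := Real.log ((J:ℝ)+1) with hLdef
    have hL2 : Real.log 2 ≤ L := Real.log_le_log (by norm_num) (by linarith)
    have hlog2 : (0.693:ℝ) ≤ Real.log 2 := by linarith [Real.log_two_gt_d9]
    have hL0 : (0:ℝ) < L := by linarith
    set a := (n:ℝ)*q with hadef
    have ha : (0:ℝ) < a := by rw [hadef]; positivity
    set l := Real.log (L/a) with hldef
    have heq : (Real.exp 1 : ℝ) * a ≤ L := by
      rw [le_div_iff₀ (by positivity : (0:ℝ) < Real.exp 1 * q)] at hb2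
      calc Real.exp 1 * a = (n:ℝ) * (Real.exp 1 * q) := by rw [hadef]; ring
        _ ≤ L := hb2
    have hRe : Real.exp 1 ≤ L/a := by rw [le_div_iff₀ ha]; linarith
    have hl1 : (1:ℝ) ≤ l := by
      rw [hldef, show (1:ℝ) = Real.log (Real.exp 1) from (Real.log_exp 1).symm]
      exact Real.log_le_log (Real.exp_pos 1) hRe
    have hl0 : (0:ℝ) < l := by linarith
    set v := 6000*L/(a*l) with hvdef
    have hv0 : (0:ℝ) < v := by rw [hvdef]; positivity
    have hx : q + 6000 * (L/((n:ℝ)*l)) = q*(1+v) := by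
      rw [hvdef, hadef]
      field_simp
    rw [hx]
    apply le_trans (chernoff_v n q v hq.le hq1.le hv0)
    apply margin_to_target J hJ
    rw [← hLdef, ← hadef]
    set lam := Real.log (1+v) with hlamdef
    have hlam0 : 0 ≤ lam := Real.log_nonneg (by linarith)
    have hlogv : Real.log v = Real.log 6000 + (l - Real.log l) := by
      have hva : v = 6000 * ((L/a)/l) := by rw [hvdef]; field_simp
      rw [hva, Real.log_mul (by norm_num) (by positivity),
          Real.log_div (by positivity) hl0.ne']
    have h6000 : (1:ℝ) ≤ Real.log 6000 := by
      rw [show (1:ℝ) = Real.log (Real.exp 1) from (Real.log_exp 1).symm]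
      apply Real.log_le_log (Real.exp_pos 1)
      linarith [Real.exp_one_lt_d9]
    have hlogl : Real.log l ≤ 0.37 * l := by
      have h1 := log_le_div_e hl0
      have he : (2.7182818283:ℝ) < Real.exp 1 := Real.exp_one_gt_d9
      have h2 : l / Real.exp 1 ≤ 0.37 * l := by
        rw [div_le_iff₀ (Real.exp_pos 1)]
        nlinarith
      linarith
    have hlamv : Real.log v ≤ lam := Real.log_le_log hv0 (by linarith)
    have hlam1 : 0.63 * l ≤ lam - 1 := by
      rw [hlogv] at hlamv
      linarith
    have hkey : a*v*(lam - 1) ≤ a*(1+v)*lam - a*v := by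
      nlinarith [mul_nonneg ha.le hlam0]
    have hval : a*v*(0.63*l) = 3780*L := by
      rw [hvdef]
      field_simp
      ring
    have hstep : 3780*L ≤ a*v*(lam-1) := by
      rw [← hval]
      apply mul_le_mul_of_nonneg_left hlam1 (by positivity)
    linarith
  · -- regime 3
    set L := Real.log ((J:ℝ)+1) with hLdef
    have hL2 : Real.log 2 ≤ L := Real.log_le_log (by norm_num) (by linarith)
    have hlog2 : (0.693:ℝ) ≤ Real.log 2 := by linarith [Real.log_two_gt_d9]
    have hL0 : (0:ℝ) < L := by linarith
    push_neg at hb2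
    have hLa : L < Real.exp 1 * ((n:ℝ)*q) := by
      rw [div_lt_iff₀ (by positivity : (0:ℝ) < Real.exp 1 * q)] at hb2
      calc L < (n:ℝ) * (Real.exp 1 * q) := hb2
        _ = Real.exp 1 * ((n:ℝ)*q) := by ring
    have harg : (0:ℝ) < q*L/(n:ℝ) := by positivity
    have hsq2 : Real.sqrt (q*L/(n:ℝ)) ≤ 2*q := by
      have h4 : q*L/(n:ℝ) ≤ 4*q^2 := by
        rw [div_le_iff₀ hn0]
        have he4 : Real.exp 1 ≤ 4 := by linarith [Real.exp_one_lt_d9]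
        have t1 : q*L ≤ q*(Real.exp 1*((n:ℝ)*q)) := mul_le_mul_of_nonneg_left hLa.le hq.le
        have t2 : q*(Real.exp 1*((n:ℝ)*q)) ≤ q*(4*((n:ℝ)*q)) := by
          apply mul_le_mul_of_nonneg_left _ hq.le
          apply mul_le_mul_of_nonneg_right he4 (by positivity)
        have t3 : q*(4*((n:ℝ)*q)) = 4*q^2*(n:ℝ) := by ring
        linarith
      calc Real.sqrt (q*L/(n:ℝ)) ≤ Real.sqrt (4*q^2) := Real.sqrt_le_sqrt h4
        _ = 2*q := by rw [show (4:ℝ)*q^2 = (2*q)^2 by ring, Real.sqrt_sq (by positivity)]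
    set s := Real.sqrt (q*L/(n:ℝ)) with hsdef
    have hs0 : 0 < s := Real.sqrt_pos.2 harg
    set v := 6000*s/q with hvdef
    have hv0 : (0:ℝ) < v := by rw [hvdef]; positivity
    have hx : q + 6000 * s = q*(1+v) := by
      rw [hvdef]; field_simp
    rw [hx]
    apply le_trans (chernoff_v n q v hq.le hq1.le hv0)
    apply margin_to_target J hJ
    rw [← hLdef]
    set lam := Real.log (1+v) with hlamdef
    have hA1 : 2*v/(2+v) ≤ lam := two_mul_div_le_log hv0.le
    have h2v : (0:ℝ) < 2+v := by linarith
    have hquad : v^2/(2+v) ≤ (1+v)*lam - v := by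
      have hid : (1+v)*(2*v/(2+v)) - v = v^2/(2+v) := by field_simp; ring
      have h1 : (1+v)*(2*v/(2+v)) ≤ (1+v)*lam :=
        mul_le_mul_of_nonneg_left hA1 (by linarith)
      linarith
    have hs2 : s^2 = q*L/(n:ℝ) := by rw [hsdef]; exact Real.sq_sqrt harg.le
    have hav2 : ((n:ℝ)*q)*v^2 = 36000000*L := by
      have hv2 : v^2 = (6000^2*(q*L/(n:ℝ)))/q^2 := by
        rw [hvdef, div_pow, mul_pow, hs2]
      rw [hv2]
      field_simp
      ring
    have hv12 : v ≤ 12000 := by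
      rw [hvdef, div_le_iff₀ hq]
      linarith [hsq2]
    have hfin : 1460*L ≤ ((n:ℝ)*q)*(v^2/(2+v)) := by
      have e1 : ((n:ℝ)*q)*(v^2/(2+v)) = 36000000*L/(2+v) := by
        rw [mul_div_assoc', hav2]
      rw [e1, le_div_iff₀ h2v]
      nlinarith
    have hmul : ((n:ℝ)*q)*(v^2/(2+v)) ≤ ((n:ℝ)*q)*((1+v)*lam - v) := by
      apply mul_le_mul_of_nonneg_left hquad (by positivity)
    nlinarith

lemma log16_le : Real.log 16 ≤ 3 := by
  have h : (16:ℝ) ≤ Real.exp 1^3 := by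
    have h0 : (2.7:ℝ) ≤ Real.exp 1 := by linarith [Real.exp_one_gt_d9]
    calc (16:ℝ) ≤ 2.7^3 := by norm_num
      _ ≤ Real.exp 1^3 := pow_le_pow_left₀ (by norm_num) h0 3
  have h2 : Real.log 16 ≤ Real.log (Real.exp 1^3) := Real.log_le_log (by norm_num) h
  rw [Real.log_pow, Real.log_exp] at h2
  simpa using h2

lemma logL_le {L : ℝ} (hL0 : 0 < L) : Real.log L ≤ L/16 + 2 := by
  have h := log_le_chord (show (0:ℝ) < 16 by norm_num) hL0
  linarith [log16_le]

lemma log3_le : Real.log 3 ≤ 1.11 := by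
  have h := log_le_div_e (show (0:ℝ) < 3 by norm_num)
  have he : (2.7182818283:ℝ) < Real.exp 1 := Real.exp_one_gt_d9
  rw [le_div_iff₀ (Real.exp_pos 1)] at h
  nlinarith [Real.log_nonneg (show (1:ℝ) ≤ 3 by norm_num)]

lemma log4_le : Real.log 4 ≤ 1.5 := by
  have h := log_le_div_e (show (0:ℝ) < 4 by norm_num)
  have he : (2.7182818283:ℝ) < Real.exp 1 := Real.exp_one_gt_d9
  rw [le_div_iff₀ (Real.exp_pos 1)] at h
  nlinarith [Real.log_nonneg (show (1:ℝ) ≤ 4 by norm_num)]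

lemma r2_lub {a L l m : ℝ} (ha : 0 < a)
    (hL2 : Real.log 2 ≤ L) (hl1 : 1 ≤ l) (hleq : l = Real.log (L/a))
    (hm2 : 2 ≤ m) (hmub : m < a + (1/32)*L/l + 1) :
    l ≤ (1/16)*L + Real.log (2*L) := by
  have hlog2 : (0.693:ℝ) ≤ Real.log 2 := by linarith [Real.log_two_gt_d9]
  have hL0 : (0:ℝ) < L := by linarith
  have hl0 : (0:ℝ) < l := by linarith
  have hlog2L : 0 ≤ Real.log (2*L) := Real.log_nonneg (by nlinarith)
  by_cases hA : a ≤ 1/2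
  · have h1 : 1/2 ≤ (1/32)*L/l := by linarith
    rw [le_div_iff₀ hl0] at h1
    linarith
  · push_neg at hA
    have h2 : L/a ≤ 2*L := by
      rw [div_le_iff₀ ha]; nlinarith
    have h3 : l ≤ Real.log (2*L) := by
      rw [hleq]; exact Real.log_le_log (by positivity) h2
    linarith

lemma r2_prod {L l : ℝ} (hL2 : Real.log 2 ≤ L) (hl1 : 1 ≤ l)
    (hl_ub : l ≤ (1/16)*L + Real.log (2*L)) :
    (2*((1/32)*L/l + 1))*(Real.log 3 + l) ≤ (3/4)*L + 20 := by
  have hlog2 : (0.693:ℝ) ≤ Real.log 2 := by linarith [Real.log_two_gt_d9]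
  have hL0 : (0:ℝ) < L := by linarith
  have hl0 : (0:ℝ) < l := by linarith
  have hlogL : Real.log L ≤ L/16 + 2 := logL_le hL0
  have hlog2L : Real.log (2*L) ≤ L/16 + 2.7 := by
    rw [Real.log_mul two_ne_zero hL0.ne']
    have := Real.log_two_lt_d9
    linarith
  have hl_ub2 : l ≤ L/8 + 2.7 := by linarith
  have hexpand : (2*((1/32)*L/l + 1))*(Real.log 3 + l)
      = (1/16)*L*(Real.log 3/l) + (1/16)*L + 2*Real.log 3 + 2*l := by
    field_simp
    ring
  have hlog30 : 0 ≤ Real.log 3 := Real.log_nonneg (by norm_num)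
  have hlog3l : Real.log 3 / l ≤ 1.11 := le_trans (div_le_self hlog30 hl1) log3_le
  have hterm : (1/16)*L*(Real.log 3/l) ≤ (1/16)*L*1.11 :=
    mul_le_mul_of_nonneg_left hlog3l (by positivity)
  rw [hexpand]
  linarith [log3_le]

lemma r2_G_H (n m : ℕ) (q L : ℝ) (hq : 0 < q) (hq2 : q ≤ 1/2) (hL2 : Real.log 2 ≤ L)
    (hm2 : 2 ≤ m) (hmn : m < n)
    (hma : (n:ℝ)*q ≤ (m:ℝ))
    (hl1 : 1 ≤ Real.log (L/((n:ℝ)*q)))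
    (hmub : (m:ℝ) < (n:ℝ)*q + (1/32)*L/Real.log (L/((n:ℝ)*q)) + 1)
    (haL : Real.exp 1 * ((n:ℝ)*q) ≤ L) :
    (m:ℝ)*Real.log ((m:ℝ)/((n:ℝ)*q))
      + ((n:ℝ)-(m:ℝ))*Real.log (((n:ℝ)-(m:ℝ))/((n:ℝ)*(1-q)))
      + Real.log (m:ℝ)/2 ≤ L + 890 := by
  have hn0 : (0:ℝ) < (n:ℝ) := by
    have : (0:ℕ) < n := by omega
    exact_mod_cast this
  set a := (n:ℝ)*q with hadef
  set l := Real.log (L/a) with hldef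
  have ha : (0:ℝ) < a := by rw [hadef]; positivity
  have hlog2 : (0.693:ℝ) ≤ Real.log 2 := by linarith [Real.log_two_gt_d9]
  have hL0 : (0:ℝ) < L := by linarith
  have hl0 : (0:ℝ) < l := by linarith
  have hm0 : (0:ℝ) < (m:ℝ) := by exact_mod_cast (by omega : 0 < m)
  have hm2R : (2:ℝ) ≤ (m:ℝ) := by exact_mod_cast hm2
  have he27 : (2.71:ℝ) ≤ Real.exp 1 := by linarith [Real.exp_one_gt_d9]
  have ha_ub : 2*a ≤ 0.74*L := by
    nlinarith [mul_nonneg (by linarith : (0:ℝ) ≤ Real.exp 1 - 2.71) ha.le]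
  have hH : ((n:ℝ)-(m:ℝ))*Real.log (((n:ℝ)-(m:ℝ))/((n:ℝ)*(1-q))) ≤ 2*a := by
    rw [hadef]
    exact H_le hq hq2 hn0 hm0.le (by exact_mod_cast hmn)
  have hdl : (1/32)*L/l ≤ (1/32)*L := div_le_self (by positivity) hl1
  have hl_ub' : l ≤ (1/16)*L + Real.log (2*L) :=
    r2_lub ha hL2 hl1 hldef hm2R (by linarith)
  have hlogL : Real.log L ≤ L/16 + 2 := logL_le hL0
  have hlog2L : Real.log (2*L) ≤ L/16 + 2.7 := by
    rw [Real.log_mul two_ne_zero hL0.ne']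
    have := Real.log_two_lt_d9
    linarith
  have hl_ub : l ≤ L/8 + 2.7 := by linarith
  have hm4L : (m:ℝ) ≤ 4*L := by linarith
  have hlogm : Real.log (m:ℝ) ≤ L/16 + 3.5 := by
    have h1 : Real.log (m:ℝ) ≤ Real.log (4*L) := Real.log_le_log hm0 hm4L
    rw [Real.log_mul (by norm_num) hL0.ne'] at h1
    linarith [log4_le]
  by_cases hcase : (m:ℝ) - a ≤ a
  · -- case B : small deviation
    have hGchi : (m:ℝ)*Real.log ((m:ℝ)/a) ≤ (m:ℝ)*((m:ℝ)-a)/a := xlog_le_chi ha hm0.le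
    have hGB : (m:ℝ)*((m:ℝ)-a)/a ≤ 2*((m:ℝ)-a) := by
      rw [div_le_iff₀ ha]
      nlinarith [mul_nonneg (by linarith : (0:ℝ) ≤ a - ((m:ℝ)-a))
        (by linarith : (0:ℝ) ≤ (m:ℝ)-a)]
    linarith
  · -- case A : large deviation
    push_neg at hcase
    set d1 := (1/32)*L/l + 1 with hd1def
    have hd10 : 0 < d1 := by rw [hd1def]; positivity
    have hd1ub : d1 ≤ (1/32)*L + 1 := by rw [hd1def]; linarith
    have hda : a < d1 := by rw [hd1def]; linarith
    have hm2d1 : (m:ℝ) ≤ 2*d1 := by rw [hd1def]; linarith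
    have hG1 : (m:ℝ)*Real.log ((m:ℝ)/a) ≤ (2*d1)*Real.log ((2*d1)/a) :=
      xlog_mono ha hma hm2d1
    have h3L : 2*d1 ≤ 3*L := by
      rw [hd1def]; linarith
    have hlog2d1 : Real.log ((2*d1)/a) ≤ Real.log 3 + l := by
      have h1 : (2*d1)/a ≤ 3*(L/a) := by
        rw [show 3*(L/a) = (3*L)/a by ring]
        gcongr
      calc Real.log ((2*d1)/a) ≤ Real.log (3*(L/a)) := Real.log_le_log (by positivity) h1
        _ = Real.log 3 + l := by
            rw [Real.log_mul (by norm_num) (by positivity), hldef]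
    have hG2 : (m:ℝ)*Real.log ((m:ℝ)/a) ≤ (2*d1)*(Real.log 3 + l) :=
      le_trans hG1 (mul_le_mul_of_nonneg_left hlog2d1 (by positivity))
    have hG3 : (2*d1)*(Real.log 3 + l) ≤ (3/4)*L + 20 := by
      rw [hd1def]
      exact r2_prod hL2 hl1 hl_ub'
    linarith

lemma r2_mn (n : ℕ) (q L : ℝ) (hq : 0 < q) (hq2 : q ≤ 1/2) (hL2 : Real.log 2 ≤ L)
    (hn2 : 2 ≤ n)
    (hl1 : 1 ≤ Real.log (L/((n:ℝ)*q)))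
    (hnub : (n:ℝ) < (n:ℝ)*q + (1/32)*L/Real.log (L/((n:ℝ)*q)) + 1)
    (haL : Real.exp 1 * ((n:ℝ)*q) ≤ L) :
    (n:ℝ)*Real.log (1/q) ≤ L + 890 := by
  have hn0 : (0:ℝ) < (n:ℝ) := by exact_mod_cast (by omega : 0 < n)
  have hn2R : (2:ℝ) ≤ (n:ℝ) := by exact_mod_cast hn2
  set a := (n:ℝ)*q with hadef
  set l := Real.log (L/a) with hldef
  have ha : (0:ℝ) < a := by rw [hadef]; positivity
  have hlog2 : (0.693:ℝ) ≤ Real.log 2 := by linarith [Real.log_two_gt_d9]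
  have hL0 : (0:ℝ) < L := by linarith
  have hl0 : (0:ℝ) < l := by linarith
  set d1 := (1/32)*L/l + 1 with hd1def
  have hdl : (1/32)*L/l ≤ (1/32)*L := div_le_self (by positivity) hl1
  have hd10 : 0 < d1 := by rw [hd1def]; positivity
  have hn2d1 : (n:ℝ) ≤ 2*d1 := by
    have h1 : (n:ℝ)*(1-q) < d1 := by
      rw [hd1def, hadef] at *
      nlinarith [hnub]
    nlinarith [hn0]
  have h3L : 2*d1 ≤ 3*L := by rw [hd1def]; linarith
  have hqinv : Real.log (1/q) ≤ Real.log 3 + l := by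
    have hna : (1:ℝ)/q = (n:ℝ)/a := by rw [hadef]; field_simp
    have h1 : (n:ℝ)/a ≤ 3*(L/a) := by
      rw [show 3*(L/a) = (3*L)/a by ring]
      gcongr
      linarith
    calc Real.log (1/q) = Real.log ((n:ℝ)/a) := by rw [hna]
      _ ≤ Real.log (3*(L/a)) := Real.log_le_log (by positivity) h1
      _ = Real.log 3 + l := by rw [Real.log_mul (by norm_num) (by positivity), hldef]
  have hqinv0 : 0 ≤ Real.log (1/q) := Real.log_nonneg (by rw [le_div_iff₀ hq]; linarith)
  have hprod : (n:ℝ)*Real.log (1/q) ≤ (2*d1)*(Real.log 3 + l) := by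
    apply mul_le_mul hn2d1 hqinv hqinv0 (by positivity)
  have hl_ub' : l ≤ (1/16)*L + Real.log (2*L) :=
    r2_lub ha hL2 hl1 hldef hn2R (by linarith)
  have hG3 : (2*d1)*(Real.log 3 + l) ≤ (3/4)*L + 20 := by
    rw [hd1def]
    exact r2_prod hL2 hl1 hl_ub'
  linarith

lemma phi_pos_le (n J : ℕ) (hn : 1 ≤ n) (hJ : 1 ≤ J) (q : ℝ) (hq : 0 < q) (hq2 : q ≤ 1/2) :
    0 ≤ phi J q n ∧ phi J q n ≤ 1 := by
  have hJ1 : (1:ℝ) ≤ (J:ℝ) := by exact_mod_cast hJ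
  have hq1 : q < 1 := by linarith
  have hn0 : (0:ℝ) < (n:ℝ) := by exact_mod_cast hn
  have hlog2 : (0.693:ℝ) ≤ Real.log 2 := by linarith [Real.log_two_gt_d9]
  have hL2 : Real.log 2 ≤ Real.log ((J:ℝ)+1) := Real.log_le_log (by norm_num) (by linarith)
  have hL0 : (0:ℝ) < Real.log ((J:ℝ)+1) := by linarith
  unfold phi
  rw [if_neg hq.ne']
  split_ifs with hb1 hb2
  · exact ⟨by norm_num, le_rfl⟩
  · -- regime 2
    set L := Real.log ((J:ℝ)+1) with hLdef
    set a := (n:ℝ)*q with hadef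
    set l := Real.log (L/a) with hldef
    have ha : (0:ℝ) < a := by rw [hadef]; positivity
    have heq : (Real.exp 1 : ℝ) * a ≤ L := by
      rw [le_div_iff₀ (by positivity : (0:ℝ) < Real.exp 1 * q)] at hb2
      calc Real.exp 1 * a = (n:ℝ) * (Real.exp 1 * q) := by rw [hadef]; ring
        _ ≤ L := hb2
    have hRe : Real.exp 1 ≤ L/a := by rw [le_div_iff₀ ha]; linarith
    have hl1 : (1:ℝ) ≤ l := by
      rw [hldef, show (1:ℝ) = Real.log (Real.exp 1) from (Real.log_exp 1).symm]
      exact Real.log_le_log (Real.exp_pos 1) hRe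
    have hl0 : (0:ℝ) < l := by linarith
    constructor
    · positivity
    · rw [div_le_one (by positivity)]
      push_neg at hb1
      have hlq0 : 0 < Real.log (1/q) := Real.log_pos (one_lt_one_div hq hq1)
      have hnlq : L < (n:ℝ)*Real.log (1/q) := by
        rw [div_lt_iff₀ hlq0] at hb1
        linarith
      by_cases hnL : (n:ℝ) ≤ L
      · have hsplit : l = Real.log (L/(n:ℝ)) + Real.log (1/q) := by
          rw [hldef, hadef, show L/((n:ℝ)*q) = (L/(n:ℝ))*(1/q) by field_simp]
          rw [Real.log_mul (by positivity) (by positivity)]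
        have h1 : 0 ≤ Real.log (L/(n:ℝ)) :=
          Real.log_nonneg (by rw [le_div_iff₀ hn0]; linarith)
        have h2 : (n:ℝ)*Real.log (1/q) ≤ (n:ℝ)*l := by
          apply mul_le_mul_of_nonneg_left _ hn0.le
          rw [hsplit]; linarith
        linarith
      · push_neg at hnL
        nlinarith
  · -- regime 3
    constructor
    · exact Real.sqrt_nonneg _
    · rw [show (1:ℝ) = Real.sqrt 1 from Real.sqrt_one.symm]
      apply Real.sqrt_le_sqrt
      rw [Real.sqrt_one]
      push_neg at hb2
      have hLa : Real.log ((J:ℝ)+1) < Real.exp 1 * ((n:ℝ)*q) := by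
        rw [div_lt_iff₀ (by positivity : (0:ℝ) < Real.exp 1 * q)] at hb2
        calc Real.log ((J:ℝ)+1) < (n:ℝ) * (Real.exp 1 * q) := hb2
          _ = Real.exp 1 * ((n:ℝ)*q) := by ring
      rw [div_le_one hn0]
      have he4 : Real.exp 1 ≤ 4 := by linarith [Real.exp_one_lt_d9]
      have t1 : q*Real.log ((J:ℝ)+1) ≤ q*(Real.exp 1*((n:ℝ)*q)) :=
        mul_le_mul_of_nonneg_left hLa.le hq.le
      have t2 : q*(Real.exp 1*((n:ℝ)*q)) ≤ q*(4*((n:ℝ)*q)) := by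
        apply mul_le_mul_of_nonneg_left _ hq.le
        apply mul_le_mul_of_nonneg_right he4 (by positivity)
      nlinarith [mul_nonneg (mul_nonneg hn0.le (by linarith : (0:ℝ) ≤ 1-2*q))
        (by linarith : (0:ℝ) ≤ 1+2*q)]

lemma singleton_tail (n : ℕ) (q x : ℝ) (hq0 : 0 ≤ q) (hq1 : q ≤ 1) (m : ℕ)
    (hmn : m ≤ n) (hx : x ≤ (m:ℝ)/(n:ℝ)) :
    (n.choose m : ℝ) * q^m * (1-q)^(n-m) ≤ binomTail n q x := by
  have h := binomTail_ge_sum (n := n) (q := q) (x := x) {m}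
    (by intro k hk; simp only [Finset.mem_singleton] at hk; subst hk
        rw [Finset.mem_range]; omega)
    hq0 hq1
    (by intro k hk; simp only [Finset.mem_singleton] at hk; subst hk; exact hx)
  simpa using h

lemma qn_tail (n : ℕ) (hn : 1 ≤ n) (q x : ℝ) (hq0 : 0 ≤ q) (hq1 : q ≤ 1) (hx : x ≤ 1) :
    q^n ≤ binomTail n q x := by
  have hn0 : (0:ℝ) < (n:ℝ) := by exact_mod_cast hn
  have h := singleton_tail n q x hq0 hq1 n le_rfl (by rw [div_self hn0.ne']; exact hx)
  simpa [Nat.choose_self] using h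

lemma exp_half_log {m : ℝ} (hm : 0 < m) : Real.exp (Real.log m / 2) = Real.sqrt m := by
  rw [Real.sqrt_eq_rpow, Real.rpow_def_of_pos hm]
  congr 1
  ring

lemma single_lower (n m : ℕ) (q x L : ℝ) (hq : 0 < q) (hq1 : q < 1)
    (hm1 : 1 ≤ m) (hmn : m < n) (hxm : x ≤ (m:ℝ)/(n:ℝ))
    (hEXP : (m:ℝ)*Real.log ((m:ℝ)/((n:ℝ)*q))
      + ((n:ℝ)-(m:ℝ))*Real.log (((n:ℝ)-(m:ℝ))/((n:ℝ)*(1-q)))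
      + Real.log (m:ℝ)/2 ≤ L + 890) :
    Real.exp (-L - 900) ≤ binomTail n q x := by
  apply le_trans _ (singleton_tail n q x hq.le hq1.le m hmn.le hxm)
  apply le_trans _ (pmf_lower_exp n m q hq hq1 hm1 hmn)
  have hm0 : (0:ℝ) < (m:ℝ) := by exact_mod_cast (by omega : 0 < m)
  have hsm : (0:ℝ) < Real.sqrt (m:ℝ) := Real.sqrt_pos.2 hm0
  have hid : (1/3:ℝ)/Real.sqrt (m:ℝ)
      = Real.exp (-(Real.log 3) - Real.log (m:ℝ)/2) := by
    rw [Real.exp_sub, Real.exp_neg, Real.exp_log (by norm_num : (0:ℝ) < 3), exp_half_log hm0]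
    norm_num
  rw [hid, ← Real.exp_add]
  apply Real.exp_le_exp.2
  linarith [log3_le]

lemma sq3_bound {x y z : ℝ} : (x+y+z)^2 ≤ 3*(x^2+y^2+z^2) := by
  nlinarith [sq_nonneg (x-y), sq_nonneg (x-z), sq_nonneg (y-z)]

lemma r3_lower (n : ℕ) (q x L : ℝ) (m : ℕ)
    (hq : 0 < q) (hq2 : q ≤ 1/2) (hL2 : Real.log 2 ≤ L)
    (hn1 : 1 ≤ n)
    (hLa : L < Real.exp 1 * ((n:ℝ)*q))
    (hm2 : 2 ≤ m) (hmn : m ≤ n) (hma : (n:ℝ)*q ≤ (m:ℝ))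
    (hmub : (m:ℝ) < (n:ℝ)*q + (1/32)*Real.sqrt (((n:ℝ)*q)*L) + 1)
    (hxm : x ≤ (m:ℝ)/(n:ℝ)) (hx1 : x ≤ 1) :
    Real.exp (-L - 900) ≤ binomTail n q x := by
  have hq1 : q < 1 := by linarith
  have hn0 : (0:ℝ) < (n:ℝ) := by exact_mod_cast hn1
  set a := (n:ℝ)*q with hadef
  have ha : (0:ℝ) < a := by rw [hadef]; positivity
  have hlog2 : (0.693:ℝ) ≤ Real.log 2 := by linarith [Real.log_two_gt_d9]
  have hL0 : (0:ℝ) < L := by linarith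
  have heup : Real.exp 1 ≤ 2.7182818286 := Real.exp_one_lt_d9.le
  have he4 : Real.exp 1 ≤ 4 := by linarith
  have ha14 : (1:ℝ)/4 ≤ a := by
    have h1 : Real.exp 1 * a ≤ 2.7182818286 * a := mul_le_mul_of_nonneg_right heup ha.le
    linarith
  set s := Real.sqrt (a*L) with hsdef
  have hs0 : (0:ℝ) ≤ s := Real.sqrt_nonneg _
  have hs2 : s^2 = a*L := Real.sq_sqrt (by positivity)
  have hs2a : s ≤ 2*a := by
    have h1 : a*L ≤ (2*a)^2 := by
      have i1 : a*L ≤ a*(Real.exp 1*a) := mul_le_mul_of_nonneg_left hLa.le ha.le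
      have i2 : Real.exp 1*(a*a) ≤ 4*(a*a) := mul_le_mul_of_nonneg_right he4 (by positivity)
      have e1 : a*(Real.exp 1*a) = Real.exp 1*(a*a) := by ring
      have e2 : (2*a)^2 = 4*(a*a) := by ring
      linarith
    calc s ≤ Real.sqrt ((2*a)^2) := Real.sqrt_le_sqrt h1
      _ = 2*a := Real.sqrt_sq (by positivity)
  have hsa0 : (0:ℝ) < Real.sqrt a := Real.sqrt_pos.2 ha
  set w : ℕ := Nat.ceil (Real.sqrt a) with hwdef
  have hw0 : 0 < w := by rw [hwdef]; exact Nat.ceil_pos.2 hsa0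
  have hw1 : 1 ≤ w := hw0
  have hw1R : (1:ℝ) ≤ (w:ℝ) := by exact_mod_cast hw1
  have hwlb : Real.sqrt a ≤ (w:ℝ) := by rw [hwdef]; exact Nat.le_ceil _
  have hwub : (w:ℝ) < Real.sqrt a + 1 := by
    rw [hwdef]; exact Nat.ceil_lt_add_one (Real.sqrt_nonneg a)
  set k1 : ℕ := m + w - 1 with hk1def
  have hk1m : m ≤ k1 := by omega
  have hk1R : (k1:ℝ) = (m:ℝ) + (w:ℝ) - 1 := by
    rw [hk1def]
    have h : m + w - 1 = m + (w - 1) := by omega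
    rw [h]
    push_cast [Nat.cast_sub hw1]
    ring
  have hk1ub : (k1:ℝ) < a + ((1/32)*s + Real.sqrt a + 1) := by
    rw [hk1R]; linarith
  by_cases hcap : k1 < n
  · -- interval case
    have hq1R : (0:ℝ) < 1 - q := by linarith
    have hain : a < (n:ℝ) := by
      rw [hadef]
      have h := mul_lt_mul_of_pos_left hq1 hn0
      rw [mul_one] at h
      exact h
    have hn2a : (n:ℝ) ≤ 2*((n:ℝ)-a) := by
      rw [hadef]
      have h := mul_nonneg hn0.le (by linarith : (0:ℝ) ≤ 1 - 2*q)
      have e1 : (n:ℝ)*(1-2*q) = (n:ℝ) - 2*((n:ℝ)*q) := by ring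
      linarith
    have hNa : (n:ℝ)*(1-q) = (n:ℝ) - a := by rw [hadef]; ring
    have hkey : ∀ k ∈ Finset.Icc m k1,
        (1/3:ℝ)/Real.sqrt (k1:ℝ) * Real.exp (-(L+31))
          ≤ (n.choose k : ℝ) * q^k * (1-q)^(n-k) := by
      intro k hk
      obtain ⟨hkm, hkk1⟩ := Finset.mem_Icc.mp hk
      have hk1n : k < n := lt_of_le_of_lt hkk1 hcap
      have hk1le : 1 ≤ k := by omega
      have hkR : (m:ℝ) ≤ (k:ℝ) := by exact_mod_cast hkm
      have hkk1R : (k:ℝ) ≤ (k1:ℝ) := by exact_mod_cast hkk1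
      have hk0R : (0:ℝ) < (k:ℝ) := by exact_mod_cast (by omega : 0 < k)
      have hknR : (k:ℝ) < (n:ℝ) := by exact_mod_cast hk1n
      apply le_trans _ (pmf_lower_exp n k q hq hq1 hk1le hk1n)
      have hchi := chi2_bound ha hain hk0R hknR
      have hΔub : (k:ℝ) - a ≤ (1/32)*s + Real.sqrt a + 1 := by linarith
      have hΔ0 : (0:ℝ) ≤ (k:ℝ) - a := by linarith
      have hsq : ((k:ℝ)-a)^2 ≤ ((1/32)*s + Real.sqrt a + 1)^2 :=
        pow_le_pow_left₀ hΔ0 hΔub 2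
      have hp1 : ((k:ℝ)-a)^2*(n:ℝ) ≤ ((1/32)*s + Real.sqrt a + 1)^2*(2*((n:ℝ)-a)) :=
        mul_le_mul hsq hn2a hn0.le (by positivity)
      have hX1 : ((k:ℝ)-a)^2*(n:ℝ)/(a*((n:ℝ)-a))
          ≤ 2*((1/32)*s + Real.sqrt a + 1)^2/a := by
        rw [div_le_div_iff₀ (mul_pos ha (by linarith)) ha]
        have h := mul_le_mul_of_nonneg_right hp1 ha.le
        have e1 : ((1/32)*s + Real.sqrt a + 1)^2*(2*((n:ℝ)-a))*a
            = 2*((1/32)*s + Real.sqrt a + 1)^2*(a*((n:ℝ)-a)) := by ring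
        linarith
      have hsqa : (Real.sqrt a)^2 = a := Real.sq_sqrt ha.le
      have hΔsq : ((1/32)*s + Real.sqrt a + 1)^2 ≤ 3*((1/1024)*(a*L) + a + 1) := by
        have h1 := sq3_bound (x := (1/32)*s) (y := Real.sqrt a) (z := 1)
        have e1 : ((1/32)*s)^2 = (1/1024)*(s^2) := by ring
        rw [hs2] at e1
        linarith [e1 ▸ h1, hsqa]
      have hX2 : 2*((1/32)*s + Real.sqrt a + 1)^2/a ≤ L + 31 := by
        rw [div_le_iff₀ ha]
        have h := mul_nonneg ha.le hL0.le
        have e1 : (L+31)*a = a*L + 31*a := by ring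
        linarith [hΔsq, ha14]
      have hGH : (k:ℝ)*Real.log ((k:ℝ)/((n:ℝ)*q))
          + ((n:ℝ)-(k:ℝ))*Real.log (((n:ℝ)-(k:ℝ))/((n:ℝ)*(1-q))) ≤ L + 31 := by
        rw [← hadef, hNa]
        calc (k:ℝ)*Real.log ((k:ℝ)/a) + ((n:ℝ)-(k:ℝ))*Real.log (((n:ℝ)-(k:ℝ))/((n:ℝ)-a))
            ≤ ((k:ℝ)-a)^2*(n:ℝ)/(a*((n:ℝ)-a)) := hchi
          _ ≤ 2*((1/32)*s + Real.sqrt a + 1)^2/a := hX1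
          _ ≤ L + 31 := hX2
      have hd1 : (1/3:ℝ)/Real.sqrt (k1:ℝ) ≤ (1/3)/Real.sqrt (k:ℝ) := by
        apply div_le_div_of_nonneg_left (by norm_num) (Real.sqrt_pos.2 hk0R)
          (Real.sqrt_le_sqrt hkk1R)
      apply mul_le_mul hd1 (Real.exp_le_exp.2 (by linarith)) (Real.exp_pos _).le
        (by positivity)
    have hsub : Finset.Icc m k1 ⊆ Finset.range (n+1) := by
      intro k hk
      rw [Finset.mem_range]
      have := (Finset.mem_Icc.mp hk).2
      omega
    have hcond : ∀ k ∈ Finset.Icc m k1, x ≤ (k:ℝ)/(n:ℝ) := by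
      intro k hk
      have h1 : (m:ℝ) ≤ (k:ℝ) := by exact_mod_cast (Finset.mem_Icc.mp hk).1
      apply le_trans hxm
      gcongr
    have hsum := binomTail_ge_sum (Finset.Icc m k1) hsub hq.le hq1.le hcond
    have hcard : (Finset.Icc m k1).card = w := by
      rw [Nat.card_Icc]; omega
    have hlow := Finset.card_nsmul_le_sum (Finset.Icc m k1)
      (fun k => (n.choose k : ℝ) * q^k * (1-q)^(n-k))
      ((1/3:ℝ)/Real.sqrt (k1:ℝ) * Real.exp (-(L+31))) hkey
    rw [hcard, nsmul_eq_mul] at hlow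
    have hk10 : (0:ℝ) < (k1:ℝ) := by exact_mod_cast (by omega : 0 < k1)
    have hsk1 : (0:ℝ) < Real.sqrt (k1:ℝ) := Real.sqrt_pos.2 hk10
    have hwk1 : Real.sqrt (k1:ℝ) ≤ 2*(w:ℝ) := by
      by_cases ha1 : 1 ≤ a
      · have hsaa : Real.sqrt a ≤ a := by
          have h2 : a ≤ a^2 := by
            have h := mul_nonneg ha.le (by linarith : (0:ℝ) ≤ a - 1)
            have e1 : a*(a-1) = a^2 - a := by ring
            linarith
          have h3 : Real.sqrt a ≤ Real.sqrt (a^2) := Real.sqrt_le_sqrt h2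
          rwa [Real.sqrt_sq ha.le] at h3
        have hk14a : (k1:ℝ) ≤ 4*a := by linarith
        calc Real.sqrt (k1:ℝ) ≤ Real.sqrt (4*a) := Real.sqrt_le_sqrt hk14a
          _ = 2*Real.sqrt a := by
              rw [show (4:ℝ)*a = 2^2*a by ring, Real.sqrt_mul (by positivity) a,
                Real.sqrt_sq (by norm_num)]
          _ ≤ 2*(w:ℝ) := by linarith
      · push_neg at ha1
        have hsa1 : Real.sqrt a ≤ 1 := by
          rw [show (1:ℝ) = Real.sqrt 1 from Real.sqrt_one.symm]
          exact Real.sqrt_le_sqrt (by linarith)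
        have hk14 : (k1:ℝ) ≤ 4 := by linarith
        calc Real.sqrt (k1:ℝ) ≤ Real.sqrt 4 := Real.sqrt_le_sqrt hk14
          _ = 2 := by rw [show (4:ℝ) = 2^2 by norm_num, Real.sqrt_sq (by norm_num)]
          _ ≤ 2*(w:ℝ) := by linarith
    have hfrac : (1:ℝ)/2 ≤ (w:ℝ)/Real.sqrt (k1:ℝ) := by
      rw [le_div_iff₀ hsk1]; linarith
    have h869 : Real.exp (-L-900) ≤ (1/6:ℝ)*Real.exp (-(L+31)) := by
      have hsplit : Real.exp (-L-900) = Real.exp (-(L+31)) * Real.exp (-869) := by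
        rw [← Real.exp_add]; congr 1; ring
      rw [hsplit]
      have h870 : (870:ℝ) ≤ Real.exp 869 := by linarith [Real.add_one_le_exp (869:ℝ)]
      have h6 : Real.exp (-869) ≤ 1/6 := by
        rw [Real.exp_neg]
        have := inv_anti₀ (show (0:ℝ) < 6 by norm_num) (by linarith : (6:ℝ) ≤ Real.exp 869)
        simpa using this
      have h := mul_le_mul_of_nonneg_left h6 (Real.exp_pos (-(L+31))).le
      linarith
    have hwt : Real.exp (-L-900)
        ≤ (w:ℝ)*((1/3:ℝ)/Real.sqrt (k1:ℝ) * Real.exp (-(L+31))) := by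
      have e1 : (w:ℝ)*((1/3:ℝ)/Real.sqrt (k1:ℝ) * Real.exp (-(L+31)))
          = ((w:ℝ)/Real.sqrt (k1:ℝ))*(1/3) * Real.exp (-(L+31)) := by ring
      rw [e1]
      calc Real.exp (-L-900) ≤ (1/6:ℝ)*Real.exp (-(L+31)) := h869
        _ ≤ ((w:ℝ)/Real.sqrt (k1:ℝ))*(1/3) * Real.exp (-(L+31)) := by
            apply mul_le_mul_of_nonneg_right _ (Real.exp_pos _).le
            linarith
    calc Real.exp (-L-900)
        ≤ (w:ℝ)*((1/3:ℝ)/Real.sqrt (k1:ℝ) * Real.exp (-(L+31))) := hwt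
      _ ≤ ∑ k ∈ Finset.Icc m k1, (n.choose k : ℝ) * q^k * (1-q)^(n-k) := hlow
      _ ≤ binomTail n q x := hsum
  · -- overflow case
    push_neg at hcap
    have hnk1 : (n:ℝ) ≤ (k1:ℝ) := by exact_mod_cast hcap
    have hsan : Real.sqrt a ≤ Real.sqrt (n:ℝ) := by
      apply Real.sqrt_le_sqrt
      rw [hadef]
      have h := mul_le_mul_of_nonneg_left hq1.le hn0.le
      rw [mul_one] at h
      exact h
    have hub : (n:ℝ) < a + ((1/32)*s + Real.sqrt a + 1) := lt_of_le_of_lt hnk1 hk1ub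
    have han2 : a ≤ (n:ℝ)/2 := by
      rw [hadef]
      have h := mul_le_mul_of_nonneg_left hq2 hn0.le
      linarith
    have hn16 : (n:ℝ) ≤ 16 := by
      by_contra hcon
      push_neg at hcon
      have hsn : Real.sqrt (n:ℝ) ≤ (n:ℝ)/4 := by
        have h1 : (n:ℝ) ≤ ((n:ℝ)/4)^2 := by
          have h2 : 0 ≤ ((n:ℝ)-16)*(n:ℝ) := mul_nonneg (by linarith) hn0.le
          have e1 : ((n:ℝ)-16)*(n:ℝ) = (n:ℝ)*(n:ℝ) - 16*(n:ℝ) := by ring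
          have e2 : ((n:ℝ)/4)^2 = (n:ℝ)*(n:ℝ)/16 := by ring
          linarith
        calc Real.sqrt (n:ℝ) ≤ Real.sqrt (((n:ℝ)/4)^2) := Real.sqrt_le_sqrt h1
          _ = (n:ℝ)/4 := Real.sqrt_sq (by linarith)
      linarith
    have hq64 : 1/q ≤ 64 := by
      rw [div_le_iff₀ hq]
      have p1 : (n:ℝ)*q ≤ 16*q := mul_le_mul_of_nonneg_right hn16 hq.le
      have p2 : Real.exp 1*((n:ℝ)*q) ≤ 2.7182818286*(16*q) := by
        apply mul_le_mul heup p1 (by positivity) (by norm_num)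
      rw [hadef] at hLa
      linarith
    have he27 : (2.71:ℝ) ≤ Real.exp 1 := by linarith [Real.exp_one_gt_d9]
    have hlogq : Real.log (1/q) ≤ 24 := by
      have h1 := log_le_div_e (show (0:ℝ) < 1/q by positivity)
      have h2 : (1/q)/Real.exp 1 ≤ 64/2.71 :=
        div_le_div₀ (by norm_num) hq64 (by norm_num) he27
      have h3 : (64:ℝ)/2.71 ≤ 24 := by norm_num
      linarith
    have hlogq0 : 0 ≤ Real.log (1/q) := Real.log_nonneg (by rw [le_div_iff₀ hq]; linarith)
    have hqn : Real.exp (-L-900) ≤ q^n := by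
      rw [pow_eq_exp hq]
      apply Real.exp_le_exp.2
      have hinv : Real.log (1/q) = -Real.log q := by rw [one_div, Real.log_inv]
      have hb : (n:ℝ)*Real.log (1/q) ≤ 16*24 :=
        mul_le_mul hn16 hlogq hlogq0 (by norm_num)
      have hc : (n:ℝ)*Real.log q = -((n:ℝ)*Real.log (1/q)) := by rw [hinv]; ring
      linarith
    exact le_trans hqn (qn_tail n hn1 q x hq.le hq1.le hx1)

lemma part_ii_key (n J : ℕ) (hn : 1 ≤ n) (hJ : 1 ≤ J) (q e : ℝ) (hq : 0 < q) (hq2 : q ≤ 1/2)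
    (hyp : Real.exp (-1000) / (2*(J:ℝ)) < 1 - (1-q)^n)
    (he : e < (1/32) * phi J q n) :
    Real.exp (-1000) / (2*(J:ℝ)) < binomTail n q (q + e) := by
  have hq1 : q < 1 := by linarith
  have hn0 : (0:ℝ) < (n:ℝ) := by exact_mod_cast hn
  have hJ1 : (1:ℝ) ≤ (J:ℝ) := by exact_mod_cast hJ
  have hlog2 : (0.693:ℝ) ≤ Real.log 2 := by linarith [Real.log_two_gt_d9]
  have hL2 : Real.log 2 ≤ Real.log ((J:ℝ)+1) := Real.log_le_log (by norm_num) (by linarith)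
  have hL0 : (0:ℝ) < Real.log ((J:ℝ)+1) := by linarith
  rcases le_or_gt (q+e) (1/(n:ℝ)) with hsmall | hbig
  · calc Real.exp (-1000) / (2*(J:ℝ)) < 1 - (1-q)^n := hyp
      _ = binomTail n q (1/(n:ℝ)) := (binomTail_eq_one_sub hn (by positivity) le_rfl).symm
      _ ≤ binomTail n q (q+e) := binomTail_anti hq.le hq1.le hsmall
  · obtain ⟨hphi0, hphi1⟩ := phi_pos_le n J hn hJ q hq hq2
    have hxe1 : q + e < 1 := by linarith
    have hqe0 : (0:ℝ) < q + e := lt_trans (by positivity) hbig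
    have hne1 : (1:ℝ) < (n:ℝ)*(q+e) := by
      have h := hbig
      rw [div_lt_iff₀ hn0] at h
      nlinarith [h]
    set m : ℕ := max (Nat.ceil ((n:ℝ)*(q+e))) (Nat.ceil ((n:ℝ)*q)) with hmdef
    have hm2 : 2 ≤ m := by
      have h2 : 1 < Nat.ceil ((n:ℝ)*(q+e)) := by
        rw [Nat.lt_ceil]
        exact_mod_cast hne1
      have h3 := le_max_left (Nat.ceil ((n:ℝ)*(q+e))) (Nat.ceil ((n:ℝ)*q))
      omega
    have hmn : m ≤ n := by
      rw [hmdef]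
      apply max_le
      · rw [Nat.ceil_le]; nlinarith
      · rw [Nat.ceil_le]; nlinarith
    have hma : (n:ℝ)*q ≤ (m:ℝ) := by
      have h1 : (n:ℝ)*q ≤ (Nat.ceil ((n:ℝ)*q) : ℝ) := Nat.le_ceil _
      have h2 : ((Nat.ceil ((n:ℝ)*q) : ℕ) : ℝ) ≤ (m:ℝ) := by
        exact_mod_cast le_max_right (Nat.ceil ((n:ℝ)*(q+e))) (Nat.ceil ((n:ℝ)*q))
      linarith
    have hxm : q + e ≤ (m:ℝ)/(n:ℝ) := by
      rw [le_div_iff₀ hn0]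
      have h1 : (n:ℝ)*(q+e) ≤ (Nat.ceil ((n:ℝ)*(q+e)) : ℝ) := Nat.le_ceil _
      have h2 : ((Nat.ceil ((n:ℝ)*(q+e)) : ℕ) : ℝ) ≤ (m:ℝ) := by
        exact_mod_cast le_max_left (Nat.ceil ((n:ℝ)*(q+e))) (Nat.ceil ((n:ℝ)*q))
      nlinarith [h1, h2]
    have hmub : (m:ℝ) < (n:ℝ)*q + (n:ℝ)*((1/32)*phi J q n) + 1 := by
      have hc1 : ((Nat.ceil ((n:ℝ)*(q+e)) : ℕ):ℝ) < (n:ℝ)*(q+e) + 1 :=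
        Nat.ceil_lt_add_one (by positivity)
      have hc2 : ((Nat.ceil ((n:ℝ)*q) : ℕ):ℝ) < (n:ℝ)*q + 1 :=
        Nat.ceil_lt_add_one (by positivity)
      have hm_eq : (m:ℝ)
          = max ((Nat.ceil ((n:ℝ)*(q+e)) : ℕ):ℝ) ((Nat.ceil ((n:ℝ)*q) : ℕ):ℝ) := by
        rw [hmdef]
        push_cast
        rfl
      have hphi00 : 0 ≤ (n:ℝ)*((1/32)*phi J q n) :=
        mul_nonneg hn0.le (mul_nonneg (by norm_num) hphi0)
      have hee : (n:ℝ)*(q+e) < (n:ℝ)*q + (n:ℝ)*((1/32)*phi J q n) := by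
        nlinarith [he, hn0]
      rw [hm_eq]
      apply max_lt
      · linarith
      · linarith
    by_cases hb1 : (n:ℝ) ≤ Real.log ((J:ℝ)+1) / Real.log (1/q)
    · -- R1
      apply lower_target J hJ
      have hlq0 : 0 < Real.log (1/q) := Real.log_pos (one_lt_one_div hq hq1)
      have hnlq : (n:ℝ)*Real.log (1/q) ≤ Real.log ((J:ℝ)+1) := by
        rw [le_div_iff₀ hlq0] at hb1
        linarith
      have hqn : Real.exp (-Real.log ((J:ℝ)+1) - 900) ≤ q^n := by
        rw [pow_eq_exp hq]
        apply Real.exp_le_exp.2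
        have hinv : (n:ℝ)*Real.log q = -((n:ℝ)*Real.log (1/q)) := by
          rw [one_div, Real.log_inv]; ring
        linarith
      exact le_trans hqn (qn_tail n hn q (q+e) hq.le hq1.le hxe1.le)
    · by_cases hb2 : (n:ℝ) ≤ Real.log ((J:ℝ)+1) / (Real.exp 1 * q)
      · -- R2
        apply lower_target J hJ
        have hphieq : phi J q n
            = Real.log ((J:ℝ)+1) / ((n:ℝ) * Real.log (Real.log ((J:ℝ)+1)/((n:ℝ)*q))) := by
          unfold phi
          rw [if_neg hq.ne', if_neg hb1, if_pos hb2]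
        have haL : Real.exp 1 * ((n:ℝ)*q) ≤ Real.log ((J:ℝ)+1) := by
          rw [le_div_iff₀ (by positivity : (0:ℝ) < Real.exp 1 * q)] at hb2
          have e1 : (n:ℝ)*(Real.exp 1*q) = Real.exp 1*((n:ℝ)*q) := by ring
          linarith
        have ha : (0:ℝ) < (n:ℝ)*q := by positivity
        have hRe : Real.exp 1 ≤ Real.log ((J:ℝ)+1)/((n:ℝ)*q) := by
          rw [le_div_iff₀ ha]; linarith
        have hl1 : (1:ℝ) ≤ Real.log (Real.log ((J:ℝ)+1)/((n:ℝ)*q)) := by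
          have h := Real.log_le_log (Real.exp_pos 1) hRe
          rwa [Real.log_exp] at h
        have hl0 : (0:ℝ) < Real.log (Real.log ((J:ℝ)+1)/((n:ℝ)*q)) := by linarith
        have hmub' : (m:ℝ) < (n:ℝ)*q
            + (1/32)*Real.log ((J:ℝ)+1)/Real.log (Real.log ((J:ℝ)+1)/((n:ℝ)*q)) + 1 := by
          have hid : (n:ℝ)*((1/32)*(Real.log ((J:ℝ)+1)
                / ((n:ℝ)*Real.log (Real.log ((J:ℝ)+1)/((n:ℝ)*q)))))
              = (1/32)*Real.log ((J:ℝ)+1)/Real.log (Real.log ((J:ℝ)+1)/((n:ℝ)*q)) := by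
            field_simp
          rw [hphieq, hid] at hmub
          exact hmub
        rcases lt_or_eq_of_le hmn with hmlt | hmeq
        · exact single_lower n m q (q+e) (Real.log ((J:ℝ)+1)) hq hq1 (by omega) hmlt hxm
            (r2_G_H n m q (Real.log ((J:ℝ)+1)) hq hq2 hL2 hm2 hmlt hma hl1 hmub' haL)
        · have hn2 : 2 ≤ n := by omega
          have hnub : (n:ℝ) < (n:ℝ)*q
              + (1/32)*Real.log ((J:ℝ)+1)/Real.log (Real.log ((J:ℝ)+1)/((n:ℝ)*q)) + 1 := by
            rw [hmeq] at hmub'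
            exact hmub'
          have hr := r2_mn n q (Real.log ((J:ℝ)+1)) hq hq2 hL2 hn2 hl1 hnub haL
          have hqn : Real.exp (-Real.log ((J:ℝ)+1) - 900) ≤ q^n := by
            rw [pow_eq_exp hq]
            apply Real.exp_le_exp.2
            have hinv : (n:ℝ)*Real.log q = -((n:ℝ)*Real.log (1/q)) := by
              rw [one_div, Real.log_inv]; ring
            linarith
          exact le_trans hqn (qn_tail n hn q (q+e) hq.le hq1.le hxe1.le)
      · -- R3
        apply lower_target J hJ
        have hphieq : phi J q n = Real.sqrt (q*Real.log ((J:ℝ)+1)/(n:ℝ)) := by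
          unfold phi
          rw [if_neg hq.ne', if_neg hb1, if_neg hb2]
        push_neg at hb2
        have hLa : Real.log ((J:ℝ)+1) < Real.exp 1 * ((n:ℝ)*q) := by
          rw [div_lt_iff₀ (by positivity : (0:ℝ) < Real.exp 1 * q)] at hb2
          have e1 : (n:ℝ)*(Real.exp 1*q) = Real.exp 1*((n:ℝ)*q) := by ring
          linarith
        have hnphi : (n:ℝ)*Real.sqrt (q*Real.log ((J:ℝ)+1)/(n:ℝ))
            = Real.sqrt (((n:ℝ)*q)*Real.log ((J:ℝ)+1)) := by
          rw [show (n:ℝ)*Real.sqrt (q*Real.log ((J:ℝ)+1)/(n:ℝ))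
              = Real.sqrt ((n:ℝ)^2) * Real.sqrt (q*Real.log ((J:ℝ)+1)/(n:ℝ)) by
            rw [Real.sqrt_sq hn0.le]]
          rw [← Real.sqrt_mul (by positivity)]
          congr 1
          field_simp
        have hmub' : (m:ℝ) < (n:ℝ)*q
            + (1/32)*Real.sqrt (((n:ℝ)*q)*Real.log ((J:ℝ)+1)) + 1 := by
          rw [hphieq] at hmub
          have e1 : (n:ℝ)*((1/32)*Real.sqrt (q*Real.log ((J:ℝ)+1)/(n:ℝ)))
              = (1/32)*((n:ℝ)*Real.sqrt (q*Real.log ((J:ℝ)+1)/(n:ℝ))) := by ring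
          rw [e1, hnphi] at hmub
          linarith
        exact r3_lower n q (q+e) (Real.log ((J:ℝ)+1)) m hq hq2 hL2 hn hLa hm2 hmn hma
          hmub' hxm hxe1.le

theorem stmt13 :
    ∃ c₀ C₁ c₂ : ℝ, 0 < c₀ ∧ c₀ < 1 / 4 ∧ 1 ≤ C₁ ∧ 0 < c₂ ∧
      ∀ (n J : ℕ), 1 ≤ n → 1 ≤ J →
      ∀ q : ℝ, 0 < q → q ≤ 1 / 2 →
        -- (i)
        epsJ c₀ J q n ≤ C₁ * phi J q n ∧
        -- the parenthetical claim: q ≥ c₀/(nJ) implies 1 - (1-q)^n > c₀/(2J)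
        (c₀ / (n * J) ≤ q → c₀ / (2 * J) < 1 - (1 - q) ^ n) ∧
        -- (ii)
        (c₀ / (2 * J) < 1 - (1 - q) ^ n →
          max (1 / n - q) (c₂ * phi J q n) ≤ epsJ c₀ J q n) ∧
        -- (iii)
        (1 - (1 - q) ^ n ≤ c₀ / (2 * J) → epsJ c₀ J q n = -q) := by
  have hc01 : Real.exp (-1000) < 1 := by
    rw [show (1:ℝ) = Real.exp 0 from Real.exp_zero.symm]
    exact Real.exp_lt_exp.2 (by norm_num)
  have hc04 : Real.exp (-1000) < 1/4 := by
    have h1 : Real.exp (-1000) ≤ Real.exp (-2) := Real.exp_le_exp.2 (by norm_num)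
    have h2 : Real.exp (-2) * Real.exp 2 = 1 := by rw [← Real.exp_add]; norm_num
    have h3 : (4:ℝ) < Real.exp 2 := by
      have he : (2.71:ℝ) ≤ Real.exp 1 := by linarith [Real.exp_one_gt_d9]
      have : Real.exp 2 = Real.exp 1 * Real.exp 1 := by rw [← Real.exp_add]; norm_num
      nlinarith
    have h4 : Real.exp (-2) < 1/4 := by
      have h5 := Real.exp_pos 2
      rw [show Real.exp (-2) = 1/Real.exp 2 by rw [Real.exp_neg]; ring]
      rw [div_lt_div_iff₀ h5 (by norm_num)]
      linarith
    linarith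
  refine ⟨Real.exp (-1000), 6000, 1/32, Real.exp_pos _, hc04, by norm_num, by norm_num,
    fun n J hn hJ q hq hq2 => ?_⟩
  have hq1 : q < 1 := by linarith
  have hn0 : (0:ℝ) < (n:ℝ) := by exact_mod_cast hn
  have hJ0 : (0:ℝ) < (J:ℝ) := by exact_mod_cast hJ
  have hJ1 : (1:ℝ) ≤ (J:ℝ) := by exact_mod_cast hJ
  have h2J : (0:ℝ) < 2*(J:ℝ) := by linarith
  have hT0 : (0:ℝ) < Real.exp (-1000) / (2*(J:ℝ)) := by positivity
  have hT1 : Real.exp (-1000) / (2*(J:ℝ)) < 1 := by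
    rw [div_lt_one h2J]
    linarith
  have hbdd : BddBelow {e : ℝ | binomTail n q (q + e) ≤ Real.exp (-1000) / (2 * (J:ℝ))} := by
    refine ⟨-q, fun b hb => ?_⟩
    simp only [Set.mem_setOf_eq] at hb
    by_contra hcon
    push_neg at hcon
    rw [binomTail_eq_one (by linarith : q + b ≤ 0)] at hb
    linarith
  refine ⟨?_, ?_, ?_, ?_⟩
  · -- (i)
    unfold epsJ
    apply csInf_le hbdd
    simp only [Set.mem_setOf_eq]
    exact part_i n J hn hJ q hq hq2
  · -- parenthetical
    intro hcq
    set t := (n:ℝ)*q with htdef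
    have ht0 : (0:ℝ) < t := by rw [htdef]; positivity
    have hpow : (1-q)^n ≤ Real.exp (-t) := by
      have h1q : (1-q) ≤ Real.exp (-q) := by linarith [Real.add_one_le_exp (-q)]
      calc (1-q)^n ≤ (Real.exp (-q))^n := pow_le_pow_left₀ (by linarith) h1q n
        _ = Real.exp ((n:ℝ)*(-q)) := (Real.exp_nat_mul _ n).symm
        _ = Real.exp (-t) := by rw [htdef]; ring_nf
    have hexpt : Real.exp (-t) ≤ 1/(1+t) := by
      have h1 : 1 + t ≤ Real.exp t := by linarith [Real.add_one_le_exp t]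
      rw [Real.exp_neg, inv_eq_one_div]
      rw [div_le_div_iff₀ (Real.exp_pos t) (by linarith)]
      linarith
    have key : Real.exp (-1000)/(2*(J:ℝ)) < 1 - 1/(1+t) := by
      have e1 : 1 - 1/(1+t) = t/(1+t) := by field_simp; ring
      rw [e1, div_lt_div_iff₀ h2J (by linarith : (0:ℝ) < 1+t)]
      have hJt : Real.exp (-1000) ≤ (J:ℝ)*t := by
        have h1 : (0:ℝ) < (n:ℝ)*(J:ℝ) := by positivity
        rw [div_le_iff₀ h1] at hcq
        calc Real.exp (-1000) ≤ q*((n:ℝ)*(J:ℝ)) := hcq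
          _ = (J:ℝ)*t := by rw [htdef]; ring
      have hct : Real.exp (-1000)*t < (J:ℝ)*t := by
        apply mul_lt_mul_of_pos_right _ ht0
        linarith
      nlinarith
    linarith [hpow, hexpt, key]
  · -- (ii)
    intro hyp
    unfold epsJ
    apply le_csInf ⟨2, by
      simp only [Set.mem_setOf_eq]
      rw [binomTail_eq_zero (by linarith : (1:ℝ) < q + 2)]
      exact hT0.le⟩
    intro b hb
    simp only [Set.mem_setOf_eq] at hb
    apply max_le
    · by_contra hcon
      push_neg at hcon
      have h1 : binomTail n q (1/(n:ℝ)) ≤ binomTail n q (q + b) :=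
        binomTail_anti hq.le hq1.le (by linarith)
      rw [binomTail_eq_one_sub hn (by positivity) le_rfl] at h1
      linarith
    · by_contra hcon
      push_neg at hcon
      have := part_ii_key n J hn hJ q b hq hq2 hyp hcon
      linarith
  · -- (iii)
    intro h3
    have hSeq : {e : ℝ | binomTail n q (q + e) ≤ Real.exp (-1000) / (2 * (J:ℝ))}
        = Set.Ioi (-q) := by
      ext b
      simp only [Set.mem_setOf_eq, Set.mem_Ioi]
      constructor
      · intro hbS
        by_contra hle
        push_neg at hle
        rw [binomTail_eq_one (by linarith : q + b ≤ 0)] at hbS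
        linarith
      · intro hgt
        have hqb : (0:ℝ) < q + b := by linarith
        have hx0 : (0:ℝ) < min (q+b) (1/(n:ℝ)) := lt_min hqb (by positivity)
        have h1 : binomTail n q (q+b) ≤ binomTail n q (min (q+b) (1/(n:ℝ))) :=
          binomTail_anti hq.le hq1.le (min_le_left _ _)
        rw [binomTail_eq_one_sub hn hx0 (min_le_right _ _)] at h1
        linarith
    unfold epsJ
    rw [hSeq, csInf_Ioi]
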